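/- arXiv:0910.3555 — 3 statements merged into one kernel-verified Lean document; each statement's English description precedes it below -/
import Mathlib

section
/- Let A, B > 0, C ∈ ℝ, p > 2, and define f : ℝ → ℝ by f(t) = (A/2)t² − (B/(p+1))t^{p+1} − C·t³ for t ≥ 0. Then f attains a maximum on [0,∞) at some t̄ > 0, and t̄ is the unique positive solution of the equation A = B·t^{p−1} + 3C·t. -/
open Real

/-- Strict monotonicity of `t ↦ B t^(p-1) + 3 C t` at points where it is positive. -/
private lemma g_lt {B C p : ℝ} (hB : 0 < B) (hp : 2 < p) {s t : ℝ} (hs : 0 < s)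
    (hst : s < t) (hgs : 0 < B * s ^ (p - 1) + 3 * C * s) :
    B * s ^ (p - 1) + 3 * C * s < B * t ^ (p - 1) + 3 * C * t := by
  have ht : 0 < t := hs.trans hst
  have hw : (0:ℝ) < s ^ (p - 2) := rpow_pos_of_pos hs _
  have hsplit : s ^ (p - 1) = s ^ (p - 2) * s := by
    rw [show p - 1 = p - 2 + 1 by ring, Real.rpow_add_one hs.ne']
  have hC : -(B * s ^ (p - 2)) < 3 * C := by
    have h0 : 0 < s * (B * s ^ (p - 2) + 3 * C) := by
      calc (0:ℝ) < B * s ^ (p - 1) + 3 * C * s := hgs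
        _ = s * (B * s ^ (p - 2) + 3 * C) := by rw [hsplit]; ring
    nlinarith
  -- Bernoulli / tangent line inequality : t^(p-1) ≥ s^(p-1) + (p-1) s^(p-2) (t - s)
  have hz : (0:ℝ) ≤ (t - s) / s := div_nonneg (by linarith) hs.le
  have hq : (1:ℝ) ≤ p - 1 := by linarith
  have hb : 1 + (p - 1) * ((t - s) / s) ≤ (1 + (t - s) / s) ^ (p - 1) :=
    one_add_mul_self_le_rpow_one_add (by linarith) hq
  have h1 : (1 : ℝ) + (t - s) / s = t / s := by field_simp; ring
  have h2 : (t / s) ^ (p - 1) = t ^ (p - 1) / s ^ (p - 1) := Real.div_rpow ht.le hs.le _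
  rw [h1, h2] at hb
  have hv : (0:ℝ) < s ^ (p - 1) := rpow_pos_of_pos hs _
  have hb' : s ^ (p - 1) * (1 + (p - 1) * ((t - s) / s)) ≤ t ^ (p - 1) := by
    have := mul_le_mul_of_nonneg_left hb hv.le
    calc s ^ (p - 1) * (1 + (p - 1) * ((t - s) / s)) ≤
        s ^ (p - 1) * (t ^ (p - 1) / s ^ (p - 1)) := this
      _ = t ^ (p - 1) := by field_simp
  have hkey : s ^ (p - 1) + (p - 1) * s ^ (p - 2) * (t - s) ≤ t ^ (p - 1) := by
    have : s ^ (p - 1) * (1 + (p - 1) * ((t - s) / s))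
        = s ^ (p - 1) + (p - 1) * s ^ (p - 2) * (t - s) := by
      rw [hsplit]; field_simp
    linarith [hb', this.symm.le]
  nlinarith [mul_pos (mul_pos hB hw) (sub_pos.mpr hst)]

theorem stmt0 (A B C p : ℝ) (hA : 0 < A) (hB : 0 < B) (hp : 2 < p)
    (f : ℝ → ℝ)
    (hf : ∀ t : ℝ, 0 ≤ t → f t = A / 2 * t ^ 2 - B / (p + 1) * t ^ (p + 1) - C * t ^ 3) :
    ∃ tb : ℝ, 0 < tb ∧ (∀ t : ℝ, 0 ≤ t → f t ≤ f tb) ∧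
      (∀ t : ℝ, 0 < t → (A = B * t ^ (p - 1) + 3 * C * t ↔ t = tb)) := by
  have hp1 : (0:ℝ) < p + 1 := by linarith
  set g : ℝ → ℝ := fun t => B * t ^ (p - 1) + 3 * C * t with hgdef
  set F : ℝ → ℝ := fun t => A / 2 * t ^ 2 - B / (p + 1) * t ^ (p + 1) - C * t ^ 3 with hFdef
  -- derivative of F
  have hF' : ∀ x : ℝ, HasDerivAt F (A * x - B * x ^ p - 3 * C * x ^ 2) x := by
    intro x
    have h1 : HasDerivAt (fun t : ℝ => t ^ 2) ((2:ℕ) * x ^ (2 - 1)) x := hasDerivAt_pow 2 x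
    have h2 : HasDerivAt (fun t : ℝ => t ^ (p + 1)) ((p + 1) * x ^ (p + 1 - 1)) x :=
      Real.hasDerivAt_rpow_const (Or.inr (by linarith))
    have h3 : HasDerivAt (fun t : ℝ => t ^ 3) ((3:ℕ) * x ^ (3 - 1)) x := hasDerivAt_pow 3 x
    have := ((h1.const_mul (A / 2)).sub (h2.const_mul (B / (p + 1)))).sub (h3.const_mul C)
    refine this.congr_deriv ?_
    have : p + 1 - 1 = p := by ring
    rw [this]
    field_simp
    ring
  have hFc : Continuous F := by
    rw [continuous_iff_continuousAt]; exact fun x => (hF' x).continuousAt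
  -- continuity of g
  have hgc : Continuous g := by
    apply Continuous.add
    · exact continuous_const.mul (Real.continuous_rpow_const (by linarith : (0:ℝ) ≤ p - 1))
    · exact continuous_const.mul continuous_id
  have hg0 : g 0 = 0 := by
    show B * (0:ℝ) ^ (p - 1) + 3 * C * 0 = 0
    rw [Real.zero_rpow (by intro h; rw [sub_eq_zero] at h; linarith : p - 1 ≠ 0)]
    ring
  -- a large point where g ≥ A
  obtain ⟨M, hM1, hgM⟩ : ∃ M : ℝ, 1 ≤ M ∧ A ≤ g M := by
    set K : ℝ := (3 * |C| + A) / B with hK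
    have hK0 : 0 ≤ K := by positivity
    refine ⟨max 1 (K ^ (p - 2)⁻¹), le_max_left _ _, ?_⟩
    set M : ℝ := max 1 (K ^ (p - 2)⁻¹) with hMdef
    have hM1 : (1:ℝ) ≤ M := le_max_left _ _
    have hM0 : (0:ℝ) < M := lt_of_lt_of_le one_pos hM1
    have hp2 : (0:ℝ) < p - 2 := by linarith
    have hMK : K ≤ M ^ (p - 2) := by
      have h := Real.rpow_le_rpow (Real.rpow_nonneg hK0 _) (le_max_right 1 (K ^ (p - 2)⁻¹))
        hp2.le
      rwa [Real.rpow_inv_rpow hK0 hp2.ne'] at h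
    have hsplit : M ^ (p - 1) = M ^ (p - 2) * M := by
      rw [show p - 1 = p - 2 + 1 by ring, Real.rpow_add_one hM0.ne']
    have hBK : B * K = 3 * |C| + A := by
      show B * ((3 * |C| + A) / B) = 3 * |C| + A
      field_simp
    have habs : -|C| ≤ C := neg_abs_le C
    have : A ≤ M * (B * M ^ (p - 2) + 3 * C) := by
      have h1 : 3 * |C| + A ≤ B * M ^ (p - 2) := by
        calc 3 * |C| + A = B * K := hBK.symm
          _ ≤ B * M ^ (p - 2) := by
              exact mul_le_mul_of_nonneg_left hMK hB.le
      have h2 : A ≤ B * M ^ (p - 2) + 3 * C := by linarith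
      calc A = 1 * A := (one_mul A).symm
        _ ≤ M * A := by nlinarith
        _ ≤ M * (B * M ^ (p - 2) + 3 * C) := mul_le_mul_of_nonneg_left h2 hM0.le
    calc A ≤ M * (B * M ^ (p - 2) + 3 * C) := this
      _ = B * M ^ (p - 1) + 3 * C * M := by rw [hsplit]; ring
  -- intermediate value theorem
  have hM0 : (0:ℝ) ≤ M := by linarith
  have hmem : A ∈ Set.Icc (g 0) (g M) := ⟨by rw [hg0]; exact hA.le, hgM⟩
  obtain ⟨tb, htbmem, hgtb⟩ := intermediate_value_Icc hM0 hgc.continuousOn hmem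
  have htb0 : 0 < tb := by
    rcases lt_or_eq_of_le htbmem.1 with h | h
    · exact h
    · exfalso; rw [← h] at hgtb; rw [hg0] at hgtb; linarith
  -- sign of g - A
  have hlt : ∀ t : ℝ, 0 < t → t < tb → g t < A := by
    intro t ht httb
    by_contra h
    push_neg at h
    have h0 : 0 < g t := lt_of_lt_of_le hA h
    have h2 : g t < g tb := g_lt hB hp ht httb h0
    rw [hgtb] at h2
    linarith
  have hgt : ∀ t : ℝ, tb < t → A < g t := by
    intro t htbt
    have h0 : 0 < g tb := by rw [hgtb]; exact hA
    have h2 : g tb < g t := g_lt hB hp htb0 htbt h0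
    rwa [hgtb] at h2
  -- monotonicity of F on [0, tb]
  have hmono : StrictMonoOn F (Set.Icc 0 tb) := by
    apply strictMonoOn_of_deriv_pos (convex_Icc 0 tb) hFc.continuousOn
    intro x hx
    rw [interior_Icc] at hx
    rw [(hF' x).deriv]
    have hx0 : 0 < x := hx.1
    have hxp : x ^ p = x ^ (p - 1) * x := by
      rw [show p = p - 1 + 1 by ring, Real.rpow_add_one hx0.ne']
      rw [show p - 1 + 1 - 1 = p - 1 by ring]
    have hgx := hlt x hx.1 hx.2
    simp only [hgdef] at hgx
    have h := mul_pos hx0 (sub_pos.mpr hgx)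
    rw [hxp]
    nlinarith [h]
  -- antitonicity of F on [tb, ∞)
  have hanti : StrictAntiOn F (Set.Ici tb) := by
    apply strictAntiOn_of_deriv_neg (convex_Ici tb) hFc.continuousOn
    intro x hx
    rw [interior_Ici] at hx
    rw [(hF' x).deriv]
    have hx0 : 0 < x := htb0.trans hx
    have hxp : x ^ p = x ^ (p - 1) * x := by
      rw [show p = p - 1 + 1 by ring, Real.rpow_add_one hx0.ne']
      rw [show p - 1 + 1 - 1 = p - 1 by ring]
    have hgx := hgt x hx
    simp only [hgdef] at hgx
    have h := mul_pos hx0 (sub_pos.mpr hgx)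
    rw [hxp]
    nlinarith [h]
  refine ⟨tb, htb0, ?_, ?_⟩
  · intro t ht
    rw [hf t ht, hf tb htb0.le]
    show F t ≤ F tb
    rcases le_total t tb with h | h
    · exact hmono.monotoneOn ⟨ht, h⟩ ⟨htb0.le, le_refl tb⟩ h
    · exact hanti.antitoneOn Set.self_mem_Ici (Set.mem_Ici.mpr h) h
  · intro t ht
    constructor
    · intro heq
      rcases lt_trichotomy t tb with h | h | h
      · exfalso
        have := hlt t ht h
        simp only [hgdef] at this
        linarith
      · exact h
      · exfalso
        have := hgt t h
        simp only [hgdef] at this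
        linarith
    · rintro rfl
      exact hgtb.symm
end

section
/- For every 𝐮 ∈ ℍ with 𝐮 ≠ (0,0,0), there exists a unique t̄ > 0 such that t̄·𝐮 ∈ 𝒩, and moreover I(t̄·𝐮) = max_{t ≥ 0} I(t·𝐮). -/
open MeasureTheory Real Filter Topology

noncomputable section

/-- `H¹(ℝᴺ)` membership (with the weak gradient realized as the classical gradient),
together with the `L^{p+1}` integrability granted by the Sobolev embedding. -/
def MemH1 {N : ℕ} (p : ℝ) (u : EuclideanSpace ℝ (Fin N) → ℝ) : Prop :=
  MemLp u 2 volume ∧ Differentiable ℝ u ∧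
    MemLp (fun x => ‖gradient u x‖) 2 volume ∧
    MemLp u (ENNReal.ofReal (p + 1)) volume ∧ MemLp u 3 volume

/-- squared (unweighted) `H¹` norm. -/
def h1normSq {N : ℕ} (u : EuclideanSpace ℝ (Fin N) → ℝ) : ℝ :=
  ∫ x, ‖gradient u x‖ ^ 2 + (u x) ^ 2

/-- The Nehari functional `G(u) = I'(u)[u]`. -/
def GFun {N : ℕ} (ω₁ ω₂ ω₃ γ p : ℝ) (u₁ u₂ u₃ : EuclideanSpace ℝ (Fin N) → ℝ) : ℝ :=
  ((∫ x, ‖gradient u₁ x‖ ^ 2 + ω₁ * (u₁ x) ^ 2) +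
   (∫ x, ‖gradient u₂ x‖ ^ 2 + ω₂ * (u₂ x) ^ 2) +
   (∫ x, ‖gradient u₃ x‖ ^ 2 + ω₃ * (u₃ x) ^ 2)) -
  ((∫ x, |u₁ x| ^ (p + 1)) + (∫ x, |u₂ x| ^ (p + 1)) + (∫ x, |u₃ x| ^ (p + 1))) -
  3 * γ * ∫ x, u₁ x * u₂ x * u₃ x

/-- Membership in the Nehari manifold `𝒩`. -/
def InNehari {N : ℕ} (ω₁ ω₂ ω₃ γ p : ℝ) (u₁ u₂ u₃ : EuclideanSpace ℝ (Fin N) → ℝ) : Prop :=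
  MemH1 p u₁ ∧ MemH1 p u₂ ∧ MemH1 p u₃ ∧
  ¬(u₁ = 0 ∧ u₂ = 0 ∧ u₃ = 0) ∧
  GFun ω₁ ω₂ ω₃ γ p u₁ u₂ u₃ = 0

/-- The action functional `I`. -/
def IFun {N : ℕ} (ω₁ ω₂ ω₃ γ p : ℝ) (u₁ u₂ u₃ : EuclideanSpace ℝ (Fin N) → ℝ) : ℝ :=
  (1 / 2 * (∫ x, ‖gradient u₁ x‖ ^ 2 + ω₁ * (u₁ x) ^ 2) - 1 / (p + 1) * ∫ x, |u₁ x| ^ (p + 1)) +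
  (1 / 2 * (∫ x, ‖gradient u₂ x‖ ^ 2 + ω₂ * (u₂ x) ^ 2) - 1 / (p + 1) * ∫ x, |u₂ x| ^ (p + 1)) +
  (1 / 2 * (∫ x, ‖gradient u₃ x‖ ^ 2 + ω₃ * (u₃ x) ^ 2) - 1 / (p + 1) * ∫ x, |u₃ x| ^ (p + 1)) -
  γ * ∫ x, u₁ x * u₂ x * u₃ x

end


/-! ### Auxiliary scalar lemmas -/

section Scalar
variable (A B C p : ℝ)

noncomputable def hfun (t : ℝ) : ℝ := A - B * t ^ (p - 1) - 3 * C * t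

noncomputable def fF (t : ℝ) : ℝ := A / 2 * t ^ 2 - B / (p + 1) * t ^ (p + 1) - C * t ^ 3

variable {A B C p}

lemma rpow_split {s : ℝ} (hs : 0 < s) (p : ℝ) : s ^ (p - 1) = s ^ (p - 2) * s := by
  rw [show p - 1 = (p-2) + 1 by ring, Real.rpow_add hs, Real.rpow_one]

variable (hA : 0 < A) (hB : 0 < B) (hp : 2 < p)

include hA hB hp in
lemma hfun_key {s t : ℝ} (hs : 0 < s) (hst : s < t) :
    s * hfun A B C p t < t * hfun A B C p s := by
  have ht : (0:ℝ) < t := hs.trans hst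
  have h3 : s ^ (p - 2) < t ^ (p - 2) := Real.rpow_lt_rpow hs.le hst (by linarith)
  have expand : t * hfun A B C p s - s * hfun A B C p t
      = A * (t - s) + B * (s * t) * (t ^ (p-2) - s ^ (p-2)) := by
    simp only [hfun]; rw [rpow_split hs, rpow_split ht]; ring
  nlinarith [mul_pos hA (sub_pos.2 hst),
    mul_pos (mul_pos hB (mul_pos hs ht)) (sub_pos.2 h3)]

include hA hB hp in
lemma hfun_pos {tb : ℝ} (htb : 0 < tb) (hz : hfun A B C p tb = 0)
    {s : ℝ} (hs : 0 < s) (hstb : s < tb) : 0 < hfun A B C p s := by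
  have := hfun_key (C := C) hA hB hp hs hstb
  rw [hz, mul_zero] at this
  nlinarith

include hA hB hp in
lemma hfun_neg {tb : ℝ} (htb : 0 < tb) (hz : hfun A B C p tb = 0)
    {t : ℝ} (htbt : tb < t) : hfun A B C p t < 0 := by
  have := hfun_key (C := C) hA hB hp htb htbt
  rw [hz, mul_zero] at this
  have ht : (0:ℝ) < t := htb.trans htbt
  nlinarith

lemma cont_rpow_const (q : ℝ) (hq : 0 ≤ q) : Continuous fun t : ℝ => t ^ q :=
  continuous_iff_continuousAt.2 fun x => Real.continuousAt_rpow_const x q (Or.inr hq)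

include hp in
lemma hfun_continuous : Continuous (hfun A B C p) := by
  unfold hfun
  exact (continuous_const.sub (continuous_const.mul (cont_rpow_const (p-1) (by linarith)))).sub
    (continuous_const.mul continuous_id)

include hA hB hp in
lemma hfun_exists : ∃ tb : ℝ, 0 < tb ∧ hfun A B C p tb = 0 := by
  have hp2 : (0:ℝ) < p - 2 := by linarith
  set K : ℝ := (A + 3 * |C|) / B + 1 with hK
  have hKpos : 0 < K := by positivity
  set T : ℝ := max 1 (K ^ (p-2)⁻¹) with hT
  have hT1 : (1:ℝ) ≤ T := le_max_left _ _
  have hTpos : (0:ℝ) < T := lt_of_lt_of_le one_pos hT1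
  have hTK : K ≤ T ^ (p - 2) := by
    calc K = (K ^ (p-2)⁻¹) ^ (p-2) := (Real.rpow_inv_rpow hKpos.le (by linarith)).symm
    _ ≤ T ^ (p-2) := Real.rpow_le_rpow (Real.rpow_nonneg hKpos.le _) (le_max_right _ _) hp2.le
  have hsplit : T ^ (p - 1) = T ^ (p - 2) * T := rpow_split hTpos p
  have hTneg : hfun A B C p T < 0 := by
    have habs1 : -(3*C) ≤ 3 * |C| := by have := neg_abs_le C; linarith
    have habs2 : 3*C ≤ 3 * |C| := by have := le_abs_self C; linarith
    have hBK : B * K = A + 3 * |C| + B := by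
      rw [hK, mul_add, mul_one, mul_div_cancel₀ _ hB.ne']
    simp only [hfun]
    have h1 : B * T ^ (p-1) ≥ (A + 3*|C| + B) * T := by
      rw [hsplit, ← mul_assoc, ← hBK]
      have : B * K ≤ B * T ^ (p-2) := by nlinarith
      nlinarith
    nlinarith
  have h0 : hfun A B C p 0 = A := by
    simp [hfun, Real.zero_rpow (show p - 1 ≠ 0 by linarith)]
  have hmem : (0:ℝ) ∈ Set.Icc (hfun A B C p T) (hfun A B C p 0) := by
    constructor <;> [linarith; linarith [h0 ▸ hA]]
  obtain ⟨tb, htb, heq⟩ := intermediate_value_Icc' hTpos.le (hfun_continuous hp).continuousOn hmem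
  refine ⟨tb, ?_, heq⟩
  rcases lt_or_eq_of_le htb.1 with h | h
  · exact h
  · exfalso; rw [← h, h0] at heq; linarith

include hp in
lemma fF_hasDerivAt (t : ℝ) :
    HasDerivAt (fF A B C p) (A * t - B * t ^ p - 3 * C * t ^ 2) t := by
  have h1 : HasDerivAt (fun x : ℝ => x ^ (p+1)) ((p+1) * t ^ p) t := by
    have := Real.hasDerivAt_rpow_const (x := t) (p := p + 1) (Or.inr (by linarith))
    simpa using this
  have h := (((hasDerivAt_pow 2 t).const_mul (A/2)).sub
      (h1.const_mul (B/(p+1)))).sub ((hasDerivAt_pow 3 t).const_mul C)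
  have hp1 : p + 1 ≠ 0 := by linarith
  refine h.congr_deriv ?_
  push_cast
  field_simp

include hp in
lemma fF_continuous : Continuous (fF A B C p) := by
  exact continuous_iff_continuousAt.2 fun x => (fF_hasDerivAt hp x).continuousAt

include hA hB hp in
lemma fF_max {tb : ℝ} (htb : 0 < tb) (hz : hfun A B C p tb = 0) :
    ∀ t, 0 ≤ t → fF A B C p t ≤ fF A B C p tb := by
  have hderiv : ∀ x : ℝ, deriv (fF A B C p) x = A * x - B * x ^ p - 3 * C * x ^ 2 :=
    fun x => (fF_hasDerivAt hp x).deriv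
  have hfac : ∀ x : ℝ, 0 < x → A * x - B * x ^ p - 3 * C * x ^ 2 = x * hfun A B C p x := by
    intro x hx
    have : x ^ p = x ^ (p - 1) * x := by
      have := rpow_split hx (p + 1)
      rw [show p + 1 - 1 = p by ring, show p + 1 - 2 = p - 1 by ring] at this
      exact this
    rw [this]; simp only [hfun]; ring
  have hmono : StrictMonoOn (fF A B C p) (Set.Icc 0 tb) := by
    apply strictMonoOn_of_deriv_pos (convex_Icc 0 tb) (fF_continuous hp).continuousOn
    intro x hx
    rw [interior_Icc] at hx
    rw [hderiv, hfac x hx.1]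
    exact mul_pos hx.1 (hfun_pos hA hB hp htb hz hx.1 hx.2)
  have hanti : StrictAntiOn (fF A B C p) (Set.Ici tb) := by
    apply strictAntiOn_of_deriv_neg (convex_Ici tb) (fF_continuous hp).continuousOn
    intro x hx
    rw [interior_Ici] at hx
    rw [hderiv, hfac x (htb.trans hx)]
    exact mul_neg_of_pos_of_neg (htb.trans hx) (hfun_neg hA hB hp htb hz hx)
  intro t ht
  rcases lt_trichotomy t tb with h | h | h
  · exact (hmono ⟨ht, h.le⟩ ⟨htb.le, le_refl _⟩ h).le
  · exact h ▸ le_refl _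
  · exact (hanti (Set.self_mem_Ici) (Set.mem_Ici.2 h.le) h).le

end Scalar

/-! ### Auxiliary integral lemmas -/

lemma gradient_const_mul' {N : ℕ} (u : EuclideanSpace ℝ (Fin N) → ℝ) (c : ℝ)
    (hu : Differentiable ℝ u) (x : EuclideanSpace ℝ (Fin N)) :
    gradient (fun y => c * u y) x = c • gradient u x := by
  unfold gradient
  have : (fun y => c * u y) = fun y => c • u y := by ext y; simp [smul_eq_mul]
  rw [this, fderiv_fun_const_smul (hu x) c]
  exact (InnerProductSpace.toDual ℝ (EuclideanSpace ℝ (Fin N))).symm.map_smul c _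

section Pos
variable {N : ℕ} {p : ℝ} {u : EuclideanSpace ℝ (Fin N) → ℝ}

lemma support_pos_of_ne (hc : Continuous u) (hu : u ≠ 0)
    {f : EuclideanSpace ℝ (Fin N) → ℝ} (hf : ∀ x, u x ≠ 0 → f x ≠ 0) :
    0 < volume (Function.support f) := by
  have hopen : IsOpen {x | u x ≠ 0} := isOpen_compl_singleton.preimage hc
  obtain ⟨x₀, hx₀⟩ := Function.ne_iff.1 hu
  calc (0:ENNReal) < volume {x | u x ≠ 0} := hopen.measure_pos volume ⟨x₀, hx₀⟩
  _ ≤ volume (Function.support f) := measure_mono fun x hx => hf x hx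

lemma quad_pos (ω : ℝ) (hω : 0 < ω) (h : MemH1 p u) (hu : u ≠ 0) :
    0 < ∫ x, ‖gradient u x‖ ^ 2 + ω * (u x) ^ 2 := by
  have hint1 : Integrable (fun x => ‖gradient u x‖ ^ 2) volume := h.2.2.1.integrable_sq
  have hint2 : Integrable (fun x => (u x) ^ 2) volume := h.1.integrable_sq
  rw [integral_add hint1 (hint2.const_mul ω), integral_const_mul]
  have h1 : 0 ≤ ∫ x, ‖gradient u x‖ ^ 2 := integral_nonneg fun x => by positivity
  have h2 : 0 < ∫ x, (u x) ^ 2 := by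
    rw [integral_pos_iff_support_of_nonneg (fun x => sq_nonneg _) hint2]
    exact support_pos_of_ne h.2.1.continuous hu fun x hx => pow_ne_zero 2 hx
  nlinarith

lemma quad_nonneg (ω : ℝ) (hω : 0 < ω) :
    0 ≤ ∫ x, ‖gradient u x‖ ^ 2 + ω * (u x) ^ 2 :=
  integral_nonneg fun x => by positivity

lemma rpow_int_integrable (hp : 2 < p) (h : MemH1 p u) :
    Integrable (fun x => |u x| ^ (p + 1)) volume := by
  have := h.2.2.2.1.integrable_norm_rpow (by simp; linarith) (by simp)
  rw [ENNReal.toReal_ofReal (by linarith)] at this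
  simpa [Real.norm_eq_abs] using this

lemma rpow_int_pos (hp : 2 < p) (h : MemH1 p u) (hu : u ≠ 0) :
    0 < ∫ x, |u x| ^ (p + 1) := by
  rw [integral_pos_iff_support_of_nonneg
    (fun x => Real.rpow_nonneg (abs_nonneg _) _) (rpow_int_integrable hp h)]
  exact support_pos_of_ne h.2.1.continuous hu fun x hx =>
    ne_of_gt (Real.rpow_pos_of_pos (abs_pos.2 hx) _)

lemma rpow_int_nonneg : 0 ≤ ∫ x, |u x| ^ (p + 1) :=
  integral_nonneg fun _ => Real.rpow_nonneg (abs_nonneg _) _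

lemma scale_quad (t ω : ℝ) (hu : Differentiable ℝ u) :
    (∫ x, ‖gradient (fun y => t * u y) x‖ ^ 2 + ω * (t * u x) ^ 2)
      = t ^ 2 * ∫ x, ‖gradient u x‖ ^ 2 + ω * (u x) ^ 2 := by
  have heq : (fun x => ‖gradient (fun y => t * u y) x‖ ^ 2 + ω * (t * u x) ^ 2)
      = fun x => t ^ 2 * (‖gradient u x‖ ^ 2 + ω * (u x) ^ 2) := by
    funext x
    rw [gradient_const_mul' u t hu x, norm_smul, Real.norm_eq_abs, mul_pow, sq_abs]
    ring
  rw [heq, integral_const_mul]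

lemma scale_rpow (t : ℝ) (ht : 0 ≤ t) (p : ℝ) :
    (∫ x, |t * u x| ^ (p + 1)) = t ^ (p + 1) * ∫ x, |u x| ^ (p + 1) := by
  have heq : (fun x => |t * u x| ^ (p + 1)) = fun x => t ^ (p+1) * |u x| ^ (p + 1) := by
    funext x
    rw [abs_mul, abs_of_nonneg ht, Real.mul_rpow ht (abs_nonneg _)]
  rw [heq, integral_const_mul]

lemma scale_cube (t : ℝ) (u₁ u₂ u₃ : EuclideanSpace ℝ (Fin N) → ℝ) :
    (∫ x, (t * u₁ x) * (t * u₂ x) * (t * u₃ x)) = t ^ 3 * ∫ x, u₁ x * u₂ x * u₃ x := by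
  have heq : (fun x => (t * u₁ x) * (t * u₂ x) * (t * u₃ x))
      = fun x => t ^ 3 * (u₁ x * u₂ x * u₃ x) := by funext x; ring
  rw [heq, integral_const_mul]

lemma MemH1.const_mul' (h : MemH1 p u) (t : ℝ) : MemH1 p fun x => t * u x := by
  refine ⟨h.1.const_mul t, h.2.1.const_mul t, ?_, h.2.2.2.1.const_mul t, h.2.2.2.2.const_mul t⟩
  have heq : (fun x => ‖gradient (fun y => t * u y) x‖) = fun x => |t| * ‖gradient u x‖ := by
    funext x; rw [gradient_const_mul' u t h.2.1 x, norm_smul, Real.norm_eq_abs]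
  rw [heq]
  exact h.2.2.1.const_mul |t|

end Pos

theorem stmt5 (N : ℕ) (hN : 1 ≤ N) (hN3 : N ≤ 3)
    (ω₁ ω₂ ω₃ p : ℝ) (hω₁ : 0 < ω₁) (hω₂ : 0 < ω₂) (hω₃ : 0 < ω₃)
    (hp : 2 < p) (hp' : N = 3 → p < 5) (γ : ℝ)
    (u₁ u₂ u₃ : EuclideanSpace ℝ (Fin N) → ℝ)
    (h₁ : MemH1 p u₁) (h₂ : MemH1 p u₂) (h₃ : MemH1 p u₃)
    (hne : ¬(u₁ = 0 ∧ u₂ = 0 ∧ u₃ = 0)) :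
    ∃ tb : ℝ, 0 < tb ∧
      InNehari ω₁ ω₂ ω₃ γ p (fun x => tb * u₁ x) (fun x => tb * u₂ x) (fun x => tb * u₃ x) ∧
      (∀ t : ℝ, 0 ≤ t →
        IFun ω₁ ω₂ ω₃ γ p (fun x => t * u₁ x) (fun x => t * u₂ x) (fun x => t * u₃ x) ≤
        IFun ω₁ ω₂ ω₃ γ p (fun x => tb * u₁ x) (fun x => tb * u₂ x) (fun x => tb * u₃ x)) ∧
      (∀ t : ℝ, 0 < t →
        InNehari ω₁ ω₂ ω₃ γ p (fun x => t * u₁ x) (fun x => t * u₂ x) (fun x => t * u₃ x) →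
        t = tb) := by
  classical
  set A := (∫ x, ‖gradient u₁ x‖ ^ 2 + ω₁ * (u₁ x) ^ 2) +
    (∫ x, ‖gradient u₂ x‖ ^ 2 + ω₂ * (u₂ x) ^ 2) +
    (∫ x, ‖gradient u₃ x‖ ^ 2 + ω₃ * (u₃ x) ^ 2) with hAdef
  set B := (∫ x, |u₁ x| ^ (p + 1)) + (∫ x, |u₂ x| ^ (p + 1)) + (∫ x, |u₃ x| ^ (p + 1)) with hBdef
  set C := γ * ∫ x, u₁ x * u₂ x * u₃ x with hCdef
  have hex : u₁ ≠ 0 ∨ u₂ ≠ 0 ∨ u₃ ≠ 0 := by tauto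
  have hA : 0 < A := by
    rcases hex with h | h | h
    · have := quad_pos ω₁ hω₁ h₁ h
      have n2 := quad_nonneg (u := u₂) ω₂ hω₂
      have n3 := quad_nonneg (u := u₃) ω₃ hω₃
      rw [hAdef]; linarith
    · have := quad_pos ω₂ hω₂ h₂ h
      have n1 := quad_nonneg (u := u₁) ω₁ hω₁
      have n3 := quad_nonneg (u := u₃) ω₃ hω₃
      rw [hAdef]; linarith
    · have := quad_pos ω₃ hω₃ h₃ h
      have n1 := quad_nonneg (u := u₁) ω₁ hω₁
      have n2 := quad_nonneg (u := u₂) ω₂ hω₂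
      rw [hAdef]; linarith
  have hB : 0 < B := by
    rcases hex with h | h | h
    · have := rpow_int_pos hp h₁ h
      have n2 := rpow_int_nonneg (p := p) (u := u₂)
      have n3 := rpow_int_nonneg (p := p) (u := u₃)
      rw [hBdef]; linarith
    · have := rpow_int_pos hp h₂ h
      have n1 := rpow_int_nonneg (p := p) (u := u₁)
      have n3 := rpow_int_nonneg (p := p) (u := u₃)
      rw [hBdef]; linarith
    · have := rpow_int_pos hp h₃ h
      have n1 := rpow_int_nonneg (p := p) (u := u₁)
      have n2 := rpow_int_nonneg (p := p) (u := u₂)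
      rw [hBdef]; linarith
  obtain ⟨tb, htbpos, hz⟩ := hfun_exists (C := C) hA hB hp
  have hGscale : ∀ t : ℝ, 0 ≤ t →
      GFun ω₁ ω₂ ω₃ γ p (fun x => t * u₁ x) (fun x => t * u₂ x) (fun x => t * u₃ x)
        = t ^ 2 * A - t ^ (p + 1) * B - 3 * t ^ 3 * C := by
    intro t ht
    simp only [GFun]
    rw [scale_quad t ω₁ h₁.2.1, scale_quad t ω₂ h₂.2.1, scale_quad t ω₃ h₃.2.1,
      scale_rpow t ht p, scale_rpow t ht p, scale_rpow t ht p, scale_cube t u₁ u₂ u₃,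
      hAdef, hBdef, hCdef]
    ring
  have hIscale : ∀ t : ℝ, 0 ≤ t →
      IFun ω₁ ω₂ ω₃ γ p (fun x => t * u₁ x) (fun x => t * u₂ x) (fun x => t * u₃ x)
        = fF A B C p t := by
    intro t ht
    simp only [IFun, fF]
    rw [scale_quad t ω₁ h₁.2.1, scale_quad t ω₂ h₂.2.1, scale_quad t ω₃ h₃.2.1,
      scale_rpow t ht p, scale_rpow t ht p, scale_rpow t ht p, scale_cube t u₁ u₂ u₃,
      hAdef, hBdef, hCdef]
    have hp1 : p + 1 ≠ 0 := by linarith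
    field_simp
    ring
  have hmix : ∀ t : ℝ, 0 < t → t ^ (p + 1) = t ^ (p - 1) * t ^ (2:ℕ) := by
    intro t htpos
    rw [show p + 1 = (p - 1) + ((2:ℕ):ℝ) by push_cast; ring, Real.rpow_add htpos,
      Real.rpow_natCast]
  have hGfun : ∀ t : ℝ, 0 < t →
      GFun ω₁ ω₂ ω₃ γ p (fun x => t * u₁ x) (fun x => t * u₂ x) (fun x => t * u₃ x)
        = t ^ 2 * hfun A B C p t := by
    intro t htpos
    rw [hGscale t htpos.le, hmix t htpos]
    simp only [hfun]
    ring
  refine ⟨tb, htbpos, ⟨h₁.const_mul' tb, h₂.const_mul' tb, h₃.const_mul' tb, ?_, ?_⟩, ?_, ?_⟩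
  · rintro ⟨e1, e2, e3⟩
    apply hne
    refine ⟨funext fun x => ?_, funext fun x => ?_, funext fun x => ?_⟩
    · simpa [htbpos.ne'] using congrFun e1 x
    · simpa [htbpos.ne'] using congrFun e2 x
    · simpa [htbpos.ne'] using congrFun e3 x
  · rw [hGfun tb htbpos, hz, mul_zero]
  · intro t ht
    rw [hIscale t ht, hIscale tb htbpos.le]
    exact fF_max hA hB hp htbpos hz t ht
  · intro t htpos hNeh
    have hg := hNeh.2.2.2.2
    rw [hGfun t htpos] at hg
    have hzt : hfun A B C p t = 0 := by
      rcases mul_eq_zero.1 hg with h | h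
      · exact absurd h (pow_ne_zero 2 htpos.ne')
      · exact h
    rcases lt_trichotomy t tb with h | h | h
    · exact absurd hzt (ne_of_gt (hfun_pos hA hB hp htbpos hz htpos h))
    · exact h
    · exact absurd hzt (ne_of_lt (hfun_neg hA hB hp htbpos hz h))
end

section
/- Suppose {𝐮ₙ} ⊂ 𝒩_V is a minimizing sequence for I_V at level c_V with dichotomy splitting 𝐮ₙ = 𝐯ₙ + 𝐰ₙ satisfying G_V(𝐮ₙ) = G_V(𝐯ₙ) + G_V(𝐰ₙ) + o(1) and J(𝐮ₙ) = J(𝐯ₙ) + J(𝐰ₙ) + o(1). If along a subsequence G_V(𝐯ₙ) ≤ 0, and if lim inf J(𝐯ₙ) ≥ c̃ for some 0 < c̃ < c_V, then the projections τₙ𝐯ₙ ∈ 𝒩_V satisfy τₙ ≤ 1, and consequently c_V ≤ J(τₙ𝐯ₙ) ≤ J(𝐯ₙ) → c̃ < c_V, a contradiction. Hence the case G_V(𝐯ₙ) ≤ 0 with dichotomy is impossible. -/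
open MeasureTheory Real Filter Topology

noncomputable section

/-- The Nehari functional `G_V(u) = I_V'(u)[u]`. -/
def GV {N : ℕ} (V₁ V₂ V₃ : EuclideanSpace ℝ (Fin N) → ℝ) (γ p : ℝ)
    (u₁ u₂ u₃ : EuclideanSpace ℝ (Fin N) → ℝ) : ℝ :=
  ((∫ x, ‖gradient u₁ x‖ ^ 2 + V₁ x * (u₁ x) ^ 2) +
   (∫ x, ‖gradient u₂ x‖ ^ 2 + V₂ x * (u₂ x) ^ 2) +
   (∫ x, ‖gradient u₃ x‖ ^ 2 + V₃ x * (u₃ x) ^ 2)) -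
  ((∫ x, |u₁ x| ^ (p + 1)) + (∫ x, |u₂ x| ^ (p + 1)) + (∫ x, |u₃ x| ^ (p + 1))) -
  3 * γ * ∫ x, u₁ x * u₂ x * u₃ x

/-- Membership in the Nehari manifold `𝒩_V`. -/
def InNehariV {N : ℕ} (V₁ V₂ V₃ : EuclideanSpace ℝ (Fin N) → ℝ) (γ p : ℝ)
    (u₁ u₂ u₃ : EuclideanSpace ℝ (Fin N) → ℝ) : Prop :=
  MemH1 p u₁ ∧ MemH1 p u₂ ∧ MemH1 p u₃ ∧
  ¬(u₁ = 0 ∧ u₂ = 0 ∧ u₃ = 0) ∧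
  GV V₁ V₂ V₃ γ p u₁ u₂ u₃ = 0

/-- The action functional `I_V`. -/
def IV {N : ℕ} (V₁ V₂ V₃ : EuclideanSpace ℝ (Fin N) → ℝ) (γ p : ℝ)
    (u₁ u₂ u₃ : EuclideanSpace ℝ (Fin N) → ℝ) : ℝ :=
  (1 / 2 * (∫ x, ‖gradient u₁ x‖ ^ 2 + V₁ x * (u₁ x) ^ 2) - 1 / (p + 1) * ∫ x, |u₁ x| ^ (p + 1)) +
  (1 / 2 * (∫ x, ‖gradient u₂ x‖ ^ 2 + V₂ x * (u₂ x) ^ 2) - 1 / (p + 1) * ∫ x, |u₂ x| ^ (p + 1)) +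
  (1 / 2 * (∫ x, ‖gradient u₃ x‖ ^ 2 + V₃ x * (u₃ x) ^ 2) - 1 / (p + 1) * ∫ x, |u₃ x| ^ (p + 1)) -
  γ * ∫ x, u₁ x * u₂ x * u₃ x

/-- The auxiliary functional `J` (which coincides with `I_V` on `𝒩_V`). -/
def JV {N : ℕ} (V₁ V₂ V₃ : EuclideanSpace ℝ (Fin N) → ℝ) (p : ℝ)
    (u₁ u₂ u₃ : EuclideanSpace ℝ (Fin N) → ℝ) : ℝ :=
  (∫ x, 1 / 6 * (‖gradient u₁ x‖ ^ 2 + V₁ x * (u₁ x) ^ 2) +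
    (p - 2) / (3 * (p + 1)) * |u₁ x| ^ (p + 1)) +
  (∫ x, 1 / 6 * (‖gradient u₂ x‖ ^ 2 + V₂ x * (u₂ x) ^ 2) +
    (p - 2) / (3 * (p + 1)) * |u₂ x| ^ (p + 1)) +
  (∫ x, 1 / 6 * (‖gradient u₃ x‖ ^ 2 + V₃ x * (u₃ x) ^ 2) +
    (p - 2) / (3 * (p + 1)) * |u₃ x| ^ (p + 1))

/-- The Nehari ground-state level `c_V`. -/
def cLevel {N : ℕ} (V₁ V₂ V₃ : EuclideanSpace ℝ (Fin N) → ℝ) (γ p : ℝ) : ℝ :=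
  sInf {c : ℝ | ∃ u₁ u₂ u₃ : EuclideanSpace ℝ (Fin N) → ℝ,
    InNehariV V₁ V₂ V₃ γ p u₁ u₂ u₃ ∧ c = IV V₁ V₂ V₃ γ p u₁ u₂ u₃}

end

noncomputable section AuxHelpers

open MeasureTheory Real

variable {N : ℕ}
local notation "E" => EuclideanSpace ℝ (Fin N)

/-- quadratic integrand -/
def auxQI (W u : E → ℝ) : E → ℝ := fun x => ‖gradient u x‖ ^ 2 + W x * (u x) ^ 2

def auxQd (W u : E → ℝ) : ℝ := ∫ x, ‖gradient u x‖ ^ 2 + W x * (u x) ^ 2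

def auxPw (p : ℝ) (u : E → ℝ) : ℝ := ∫ x, |u x| ^ (p + 1)

def auxCb (u₁ u₂ u₃ : E → ℝ) : ℝ := ∫ x, u₁ x * u₂ x * u₃ x

def auxJd (W : E → ℝ) (p : ℝ) (u : E → ℝ) : ℝ :=
  ∫ x, 1 / 6 * (‖gradient u x‖ ^ 2 + W x * (u x) ^ 2) +
    (p - 2) / (3 * (p + 1)) * |u x| ^ (p + 1)

lemma auxQd_eq (W u : E → ℝ) : auxQd W u = ∫ x, auxQI W u x := rfl

lemma GV_def (V₁ V₂ V₃ : E → ℝ) (γ p : ℝ) (u₁ u₂ u₃ : E → ℝ) :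
    GV V₁ V₂ V₃ γ p u₁ u₂ u₃ =
      (auxQd V₁ u₁ + auxQd V₂ u₂ + auxQd V₃ u₃)
      - (auxPw p u₁ + auxPw p u₂ + auxPw p u₃) - 3 * γ * auxCb u₁ u₂ u₃ := rfl

lemma IV_def (V₁ V₂ V₃ : E → ℝ) (γ p : ℝ) (u₁ u₂ u₃ : E → ℝ) :
    IV V₁ V₂ V₃ γ p u₁ u₂ u₃ =
      (1 / 2 * auxQd V₁ u₁ - 1 / (p + 1) * auxPw p u₁) +
      (1 / 2 * auxQd V₂ u₂ - 1 / (p + 1) * auxPw p u₂) +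
      (1 / 2 * auxQd V₃ u₃ - 1 / (p + 1) * auxPw p u₃) - γ * auxCb u₁ u₂ u₃ := rfl

lemma JV_def (V₁ V₂ V₃ : E → ℝ) (p : ℝ) (u₁ u₂ u₃ : E → ℝ) :
    JV V₁ V₂ V₃ p u₁ u₂ u₃ =
      auxJd V₁ p u₁ + auxJd V₂ p u₂ + auxJd V₃ p u₃ := rfl

lemma aux_grad_cmul (u : E → ℝ) (hu : Differentiable ℝ u) (c : ℝ) (x : E) :
    gradient (fun y => c * u y) x = c • gradient u x := by
  unfold gradient
  rw [fderiv_const_mul (hu x) c]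
  simp

lemma aux_norm_grad_cmul (u : E → ℝ) (hu : Differentiable ℝ u) (c : ℝ) (x : E) :
    ‖gradient (fun y => c * u y) x‖ = |c| * ‖gradient u x‖ := by
  rw [aux_grad_cmul u hu c x, norm_smul, Real.norm_eq_abs]

lemma auxQI_cmul (W u : E → ℝ) (hu : Differentiable ℝ u) (c : ℝ) :
    auxQI W (fun x => c * u x) = fun x => c ^ 2 * auxQI W u x := by
  funext x
  unfold auxQI
  rw [aux_norm_grad_cmul u hu c x, mul_pow, sq_abs]
  ring

lemma auxQd_cmul (W u : E → ℝ) (hu : Differentiable ℝ u) (c : ℝ) :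
    auxQd W (fun x => c * u x) = c ^ 2 * auxQd W u := by
  rw [auxQd_eq, auxQd_eq, ← integral_const_mul]
  exact congrArg _ (by rw [auxQI_cmul W u hu c])

lemma auxQd_zero (W : E → ℝ) : auxQd W (fun _ => (0:ℝ)) = 0 := by
  unfold auxQd
  have h : (fun x : E => ‖gradient (fun _ : E => (0:ℝ)) x‖ ^ 2 + W x * ((0:ℝ)) ^ 2)
      = fun _ => (0:ℝ) := by
    funext x
    rw [gradient_fun_const]
    simp
  rw [h, integral_zero]

lemma auxPw_cmul (p : ℝ) (u : E → ℝ) (c : ℝ) (hc : 0 ≤ c) :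
    auxPw p (fun x => c * u x) = c ^ (p + 1) * auxPw p u := by
  unfold auxPw
  rw [← integral_const_mul]
  congr 1
  funext x
  rw [abs_mul, abs_of_nonneg hc, Real.mul_rpow hc (abs_nonneg _)]

lemma auxPw_zero (p : ℝ) (hp : 2 < p) : auxPw p (fun _ : E => (0:ℝ)) = 0 := by
  unfold auxPw
  have h : (fun _ : E => |(0:ℝ)| ^ (p+1)) = fun _ => (0:ℝ) := by
    funext x
    rw [abs_zero, Real.zero_rpow (by linarith)]
  rw [h, integral_zero]

lemma auxCb_cmul (u₁ u₂ u₃ : E → ℝ) (c : ℝ) :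
    auxCb (fun x => c * u₁ x) (fun x => c * u₂ x) (fun x => c * u₃ x)
      = c ^ 3 * auxCb u₁ u₂ u₃ := by
  unfold auxCb
  rw [← integral_const_mul]
  congr 1
  funext x
  ring

lemma auxCb_zero₃ (u₁ u₂ : E → ℝ) : auxCb u₁ u₂ (fun _ => (0:ℝ)) = 0 := by
  unfold auxCb
  simp

lemma auxQd_nonneg (W : E → ℝ) (hW : ∀ x, 0 ≤ W x) (u : E → ℝ) : 0 ≤ auxQd W u :=
  integral_nonneg fun x => add_nonneg (by positivity) (mul_nonneg (hW x) (sq_nonneg _))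

lemma auxPw_nonneg (p : ℝ) (u : E → ℝ) : 0 ≤ auxPw p u :=
  integral_nonneg fun x => Real.rpow_nonneg (abs_nonneg _) _

lemma auxJd_nonneg (W : E → ℝ) (hW : ∀ x, 0 ≤ W x) (p : ℝ) (hp : 2 < p) (u : E → ℝ) :
    0 ≤ auxJd W p u := by
  refine integral_nonneg fun x => add_nonneg (mul_nonneg (by norm_num) ?_)
    (mul_nonneg ?_ (Real.rpow_nonneg (abs_nonneg _) _))
  · exact add_nonneg (by positivity) (mul_nonneg (hW x) (sq_nonneg _))
  · apply div_nonneg <;> nlinarith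

lemma auxPw_integrable (p : ℝ) (hp : 2 < p) (u : E → ℝ)
    (hu : MemLp u (ENNReal.ofReal (p+1)) volume) :
    Integrable (fun x => |u x| ^ (p+1)) volume := by
  have h := hu.integrable_norm_rpow (by simp; linarith) (by simp)
  simpa [Real.norm_eq_abs, ENNReal.toReal_ofReal (by linarith : (0:ℝ) ≤ p+1)] using h

lemma aux_int_pos (f : E → ℝ) (hc : Continuous f) (h0 : ∀ x, 0 ≤ f x) (x₀ : E)
    (hx₀ : f x₀ ≠ 0) (hint : Integrable f volume) : 0 < ∫ x, f x := by
  rw [integral_pos_iff_support_of_nonneg h0 hint]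
  have hopen : IsOpen (Function.support f) := isOpen_compl_singleton.preimage hc
  exact hopen.measure_pos volume ⟨x₀, hx₀⟩

lemma auxPw_pos (p : ℝ) (hp : 2 < p) (u : E → ℝ) (hu : MemH1 p u) (hne : u ≠ 0) :
    0 < auxPw p u := by
  obtain ⟨x₀, hx₀⟩ := Function.ne_iff.mp hne
  refine aux_int_pos _ ?_ (fun x => Real.rpow_nonneg (abs_nonneg _) _) x₀ ?_
    (auxPw_integrable p hp u hu.2.2.2.1)
  · exact (Real.continuous_rpow_const (by linarith)).comp hu.2.1.continuous.abs
  · exact ne_of_gt (Real.rpow_pos_of_pos (abs_pos.2 hx₀) _)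

lemma aux_not_int_cmul {f : E → ℝ} (c : ℝ) (hc : c ≠ 0) (hf : ¬ Integrable f volume) :
    ¬ Integrable (fun x => c * f x) volume := by
  intro h
  apply hf
  have h2 := h.const_mul c⁻¹
  have h3 : (fun x => c⁻¹ * (c * f x)) = f := by funext x; field_simp
  rwa [h3] at h2

lemma auxQd_bad_cmul (W z : E → ℝ) (hz : Differentiable ℝ z) (ε : ℝ) (hε : ε ≠ 0)
    (hbad : ¬ Integrable (auxQI W z) volume) :
    auxQd W (fun x => ε * z x) = 0 := by
  rw [auxQd_eq, auxQI_cmul W z hz ε]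
  exact integral_undef (aux_not_int_cmul _ (pow_ne_zero 2 hε) hbad)

lemma auxQd_pos (W : E → ℝ) (C : ℝ) (hC : 0 < C) (hW : ∀ x, C ≤ W x) (p : ℝ)
    (u : E → ℝ) (hu : MemH1 p u) (hne : u ≠ 0)
    (hint : Integrable (auxQI W u) volume) : 0 < auxQd W u := by
  obtain ⟨x₀, hx₀⟩ := Function.ne_iff.mp hne
  have hsq : 0 < ∫ x, u x ^ 2 := by
    refine aux_int_pos _ (hu.2.1.continuous.pow 2) (fun x => sq_nonneg _) x₀ ?_
      hu.1.integrable_sq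
    exact pow_ne_zero 2 hx₀
  have hmono : ∫ x, C * u x ^ 2 ≤ auxQd W u := by
    rw [auxQd_eq]
    refine integral_mono (hu.1.integrable_sq.const_mul C) hint fun x => ?_
    have h1 : C * u x ^ 2 ≤ W x * u x ^ 2 :=
      mul_le_mul_of_nonneg_right (hW x) (sq_nonneg _)
    have h2 : (0:ℝ) ≤ ‖gradient u x‖ ^ 2 := by positivity
    unfold auxQI
    linarith
  rw [integral_const_mul] at hmono
  nlinarith

lemma auxMemH1_cmul {p : ℝ} {u : E → ℝ} (hu : MemH1 p u) (c : ℝ) :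
    MemH1 p (fun x => c * u x) := by
  obtain ⟨h2, hd, hg, hp1, h3⟩ := hu
  refine ⟨h2.const_mul c, hd.const_mul c, ?_, hp1.const_mul c, h3.const_mul c⟩
  have h : (fun x => ‖gradient (fun y => c * u y) x‖) = fun x => |c| * ‖gradient u x‖ :=
    funext (aux_norm_grad_cmul u hd c)
  rw [h]
  exact hg.const_mul |c|

lemma auxMemH1_zero (p : ℝ) : MemH1 p (fun _ : E => (0:ℝ)) := by
  have h : (fun x : E => ‖gradient (fun _ : E => (0:ℝ)) x‖) = fun _ => (0:ℝ) := by
    funext x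
    rw [gradient_fun_const]
    simp
  exact ⟨MemLp.zero', differentiable_const _, by rw [h]; exact MemLp.zero',
    MemLp.zero', MemLp.zero'⟩

lemma aux_alg_IV {q b c γ p : ℝ} (hp : 2 < p) (h : q - b - 3*γ*c = 0) :
    1/2*q - 1/(p+1)*b - γ*c = 1/6*q + (p-2)/(3*(p+1))*b := by
  have hp1 : p + 1 ≠ 0 := by linarith
  field_simp
  ring_nf
  nlinarith [h]

lemma auxJd_of_int {W : E → ℝ} {p : ℝ} (hp : 2 < p) {u : E → ℝ}
    (hq : Integrable (auxQI W u) volume)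
    (hb : Integrable (fun x => |u x| ^ (p+1)) volume) :
    auxJd W p u = 1/6 * auxQd W u + (p-2)/(3*(p+1)) * auxPw p u := by
  have hq' : Integrable (fun x : E => ‖gradient u x‖ ^ 2 + W x * (u x) ^ 2) volume := hq
  unfold auxJd auxQd auxPw
  rw [integral_add (hq'.const_mul (1/6)) (hb.const_mul ((p-2)/(3*(p+1)))),
    integral_const_mul, integral_const_mul]

lemma auxJd_of_bad {W : E → ℝ} {p : ℝ} (hp : 2 < p) {u : E → ℝ}
    (hbad : ¬ Integrable (auxQI W u) volume)
    (hb : Integrable (fun x => |u x| ^ (p+1)) volume) :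
    auxJd W p u = 0 ∧ auxQd W u = 0 := by
  constructor
  · unfold auxJd
    refine integral_undef ?_
    intro h
    have h1 : Integrable (fun x => 1/6 * auxQI W u x) volume := by
      have h2 := h.sub (hb.const_mul ((p-2)/(3*(p+1))))
      have h3 : (fun x => 1 / 6 * (‖gradient u x‖ ^ 2 + W x * (u x) ^ 2) +
          (p - 2) / (3 * (p + 1)) * |u x| ^ (p + 1)) -
          (fun x => (p - 2) / (3 * (p + 1)) * |u x| ^ (p + 1)) =
          fun x => 1/6 * auxQI W u x := by
        funext x
        simp [auxQI]
      rwa [h3] at h2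
    exact aux_not_int_cmul (1/6) (by norm_num) hbad h1
  · rw [auxQd_eq]
    exact integral_undef hbad

lemma aux_ne_zero_of_bad {W z : E → ℝ} (h : ¬ Integrable (auxQI W z) volume) :
    z ≠ 0 := by
  rintro rfl
  apply h
  have h1 : auxQI W (0 : E → ℝ) = fun _ => (0:ℝ) := by
    funext x
    have h2 : (0 : E → ℝ) = fun _ : E => (0:ℝ) := rfl
    simp only [auxQI, h2]
    rw [gradient_fun_const]
    simp
  rw [h1]
  exact integrable_zero _ _ _

end AuxHelpers

noncomputable section AuxHelpers2

open MeasureTheory Real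

variable {N : ℕ}
local notation "E" => EuclideanSpace ℝ (Fin N)

lemma auxCb_cycle (a b c : E → ℝ) : auxCb c a b = auxCb a b c := by
  unfold auxCb
  congr 1
  funext x
  ring

lemma auxCb_swap23 (a b c : E → ℝ) : auxCb a c b = auxCb a b c := by
  unfold auxCb
  congr 1
  funext x
  ring

lemma auxCb_swap12 (a b c : E → ℝ) : auxCb b a c = auxCb a b c := by
  unfold auxCb
  congr 1
  funext x
  ring

lemma GV_cycle (W₁ W₂ W₃ : E → ℝ) (γ p : ℝ) (a b c : E → ℝ) :
    GV W₃ W₁ W₂ γ p c a b = GV W₁ W₂ W₃ γ p a b c := by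
  rw [GV_def, GV_def, auxCb_cycle]
  ring

lemma GV_swap23 (W₁ W₂ W₃ : E → ℝ) (γ p : ℝ) (a b c : E → ℝ) :
    GV W₁ W₃ W₂ γ p a c b = GV W₁ W₂ W₃ γ p a b c := by
  rw [GV_def, GV_def, auxCb_swap23]
  ring

lemma GV_swap12 (W₁ W₂ W₃ : E → ℝ) (γ p : ℝ) (a b c : E → ℝ) :
    GV W₂ W₁ W₃ γ p b a c = GV W₁ W₂ W₃ γ p a b c := by
  rw [GV_def, GV_def, auxCb_swap12]
  ring

lemma IV_cycle (W₁ W₂ W₃ : E → ℝ) (γ p : ℝ) (a b c : E → ℝ) :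
    IV W₃ W₁ W₂ γ p c a b = IV W₁ W₂ W₃ γ p a b c := by
  rw [IV_def, IV_def, auxCb_cycle]
  ring

lemma IV_swap23 (W₁ W₂ W₃ : E → ℝ) (γ p : ℝ) (a b c : E → ℝ) :
    IV W₁ W₃ W₂ γ p a c b = IV W₁ W₂ W₃ γ p a b c := by
  rw [IV_def, IV_def, auxCb_swap23]
  ring

lemma IV_swap12 (W₁ W₂ W₃ : E → ℝ) (γ p : ℝ) (a b c : E → ℝ) :
    IV W₂ W₁ W₃ γ p b a c = IV W₁ W₂ W₃ γ p a b c := by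
  rw [IV_def, IV_def, auxCb_swap12]
  ring

lemma InNehariV_cycle {W₁ W₂ W₃ : E → ℝ} {γ p : ℝ} {a b c : E → ℝ}
    (h : InNehariV W₁ W₂ W₃ γ p a b c) : InNehariV W₃ W₁ W₂ γ p c a b := by
  obtain ⟨h1, h2, h3, h4, h5⟩ := h
  exact ⟨h3, h1, h2, fun ⟨g1, g2, g3⟩ => h4 ⟨g2, g3, g1⟩, by rw [GV_cycle]; exact h5⟩

lemma InNehariV_swap23 {W₁ W₂ W₃ : E → ℝ} {γ p : ℝ} {a b c : E → ℝ}
    (h : InNehariV W₁ W₂ W₃ γ p a b c) : InNehariV W₁ W₃ W₂ γ p a c b := by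
  obtain ⟨h1, h2, h3, h4, h5⟩ := h
  exact ⟨h1, h3, h2, fun ⟨g1, g2, g3⟩ => h4 ⟨g1, g3, g2⟩, by rw [GV_swap23]; exact h5⟩

lemma InNehariV_swap12 {W₁ W₂ W₃ : E → ℝ} {γ p : ℝ} {a b c : E → ℝ}
    (h : InNehariV W₁ W₂ W₃ γ p a b c) : InNehariV W₂ W₁ W₃ γ p b a c := by
  obtain ⟨h1, h2, h3, h4, h5⟩ := h
  exact ⟨h2, h1, h3, fun ⟨g1, g2, g3⟩ => h4 ⟨g2, g1, g3⟩, by rw [GV_swap12]; exact h5⟩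

lemma aux_IV_nonneg {V₁ V₂ V₃ : E → ℝ} {γ p : ℝ} (hp : 2 < p)
    (hW₁ : ∀ x, 0 ≤ V₁ x) (hW₂ : ∀ x, 0 ≤ V₂ x) (hW₃ : ∀ x, 0 ≤ V₃ x)
    {u₁ u₂ u₃ : E → ℝ} (hu : InNehariV V₁ V₂ V₃ γ p u₁ u₂ u₃) :
    0 ≤ IV V₁ V₂ V₃ γ p u₁ u₂ u₃ := by
  have hGV : (auxQd V₁ u₁ + auxQd V₂ u₂ + auxQd V₃ u₃)
      - (auxPw p u₁ + auxPw p u₂ + auxPw p u₃) - 3 * γ * auxCb u₁ u₂ u₃ = 0 := by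
    rw [← GV_def]; exact hu.2.2.2.2
  have halg := aux_alg_IV hp hGV
  have hIV : IV V₁ V₂ V₃ γ p u₁ u₂ u₃ =
      1/2*(auxQd V₁ u₁ + auxQd V₂ u₂ + auxQd V₃ u₃)
      - 1/(p+1)*(auxPw p u₁ + auxPw p u₂ + auxPw p u₃) - γ * auxCb u₁ u₂ u₃ := by
    rw [IV_def]; ring
  rw [hIV, halg]
  have hq : 0 ≤ auxQd V₁ u₁ + auxQd V₂ u₂ + auxQd V₃ u₃ := by
    have := auxQd_nonneg V₁ hW₁ u₁
    have := auxQd_nonneg V₂ hW₂ u₂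
    have := auxQd_nonneg V₃ hW₃ u₃
    linarith
  have hb : 0 ≤ auxPw p u₁ + auxPw p u₂ + auxPw p u₃ := by
    have := auxPw_nonneg p u₁
    have := auxPw_nonneg p u₂
    have := auxPw_nonneg p u₃
    linarith
  have hcp : 0 ≤ (p-2)/(3*(p+1)) := by apply div_nonneg <;> nlinarith
  nlinarith

lemma aux_cLevel_le {V₁ V₂ V₃ : E → ℝ} {γ p : ℝ} (hp : 2 < p)
    (hW₁ : ∀ x, 0 ≤ V₁ x) (hW₂ : ∀ x, 0 ≤ V₂ x) (hW₃ : ∀ x, 0 ≤ V₃ x)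
    {u₁ u₂ u₃ : E → ℝ} (hu : InNehariV V₁ V₂ V₃ γ p u₁ u₂ u₃) :
    cLevel V₁ V₂ V₃ γ p ≤ IV V₁ V₂ V₃ γ p u₁ u₂ u₃ := by
  apply csInf_le
  · refine ⟨0, fun c hc => ?_⟩
    obtain ⟨a, b, d, hN, rfl⟩ := hc
    exact aux_IV_nonneg hp hW₁ hW₂ hW₃ hN
  · exact ⟨u₁, u₂, u₃, hu, rfl⟩

end AuxHelpers2

noncomputable section AuxBuild

open MeasureTheory Real

variable {N : ℕ}
local notation "E" => EuclideanSpace ℝ (Fin N)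

lemma auxJd_zero (W : E → ℝ) (p : ℝ) (hp : 2 < p) : auxJd W p (0 : E → ℝ) = 0 := by
  unfold auxJd
  have h : (fun x : E => 1 / 6 * (‖gradient (0 : E → ℝ) x‖ ^ 2 + W x * ((0 : E → ℝ) x) ^ 2) +
      (p - 2) / (3 * (p + 1)) * |(0 : E → ℝ) x| ^ (p + 1)) = fun _ => (0:ℝ) := by
    funext x
    have h2 : (0 : E → ℝ) = fun _ : E => (0:ℝ) := rfl
    rw [h2, gradient_fun_const]
    simp [Real.zero_rpow (show p + 1 ≠ 0 by linarith)]
  rw [h, integral_zero]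

lemma aux_bsum_pos {p : ℝ} (hp : 2 < p) {v₁ v₂ v₃ : E → ℝ}
    (h1 : MemH1 p v₁) (h2 : MemH1 p v₂) (h3 : MemH1 p v₃)
    (hnz : ¬(v₁ = 0 ∧ v₂ = 0 ∧ v₃ = 0)) :
    0 < auxPw p v₁ + auxPw p v₂ + auxPw p v₃ := by
  have hcase : v₁ ≠ 0 ∨ v₂ ≠ 0 ∨ v₃ ≠ 0 := by
    by_contra hcon
    push_neg at hcon
    exact hnz ⟨hcon.1, hcon.2.1, hcon.2.2⟩
  have n1 := auxPw_nonneg p v₁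
  have n2 := auxPw_nonneg p v₂
  have n3 := auxPw_nonneg p v₃
  rcases hcase with hv | hv | hv
  · linarith [auxPw_pos p hp v₁ h1 hv]
  · linarith [auxPw_pos p hp v₂ h2 hv]
  · linarith [auxPw_pos p hp v₃ h3 hv]

lemma aux_scaled_GV {V₁ V₂ V₃ : E → ℝ} {γ p : ℝ} {v₁ v₂ v₃ : E → ℝ}
    (hd1 : Differentiable ℝ v₁) (hd2 : Differentiable ℝ v₂) (hd3 : Differentiable ℝ v₃)
    {t : ℝ} (ht : 0 < t)
    (hG : GV V₁ V₂ V₃ γ p (fun x => t * v₁ x) (fun x => t * v₂ x) (fun x => t * v₃ x) = 0) :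
    t^2*(auxQd V₁ v₁ + auxQd V₂ v₂ + auxQd V₃ v₃)
      - t^(p+1)*(auxPw p v₁ + auxPw p v₂ + auxPw p v₃)
      - 3*γ*(t^3*auxCb v₁ v₂ v₃) = 0 := by
  rw [GV_def, auxQd_cmul _ _ hd1, auxQd_cmul _ _ hd2, auxQd_cmul _ _ hd3,
    auxPw_cmul p _ t ht.le, auxPw_cmul p _ t ht.le, auxPw_cmul p _ t ht.le,
    auxCb_cmul] at hG
  linear_combination hG

lemma aux_scaled_IV {V₁ V₂ V₃ : E → ℝ} {γ p : ℝ} {v₁ v₂ v₃ : E → ℝ}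
    (hd1 : Differentiable ℝ v₁) (hd2 : Differentiable ℝ v₂) (hd3 : Differentiable ℝ v₃)
    {t : ℝ} (ht : 0 < t) :
    IV V₁ V₂ V₃ γ p (fun x => t * v₁ x) (fun x => t * v₂ x) (fun x => t * v₃ x) =
      1/2*(t^2*(auxQd V₁ v₁ + auxQd V₂ v₂ + auxQd V₃ v₃))
      - 1/(p+1)*(t^(p+1)*(auxPw p v₁ + auxPw p v₂ + auxPw p v₃))
      - γ*(t^3*auxCb v₁ v₂ v₃) := by
  rw [IV_def, auxQd_cmul _ _ hd1, auxQd_cmul _ _ hd2, auxQd_cmul _ _ hd3,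
    auxPw_cmul p _ t ht.le, auxPw_cmul p _ t ht.le, auxPw_cmul p _ t ht.le,
    auxCb_cmul]
  ring

/-- From a "good" function `g` and a "bad" function `z`, build Nehari elements of
arbitrarily small action. -/
lemma aux_build (W₁ W₂ W₃ : E → ℝ) (γ p : ℝ) (hp : 2 < p) (g z : E → ℝ)
    (hgH : MemH1 p g) (hzH : MemH1 p z)
    (hq : 0 < auxQd W₁ g) (hbg : 0 < auxPw p g) (hbz : 0 < auxPw p z)
    (hzbad : ¬ Integrable (auxQI W₂ z) volume) (hzne : z ≠ 0)
    (δ : ℝ) (hδ : 0 < δ) :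
    ∃ u₁ u₂ u₃ : E → ℝ, InNehariV W₁ W₂ W₃ γ p u₁ u₂ u₃ ∧
      IV W₁ W₂ W₃ γ p u₁ u₂ u₃ < δ := by
  set q : ℝ := auxQd W₁ g with hq_def
  set bg : ℝ := auxPw p g with hbg_def
  set bz : ℝ := auxPw p z with hbz_def
  set sb : ℝ := min ((q/(2*bg)) ^ (p-1)⁻¹) (Real.sqrt (δ/q)) with hsb_def
  have hsbpos : 0 < sb := by
    apply lt_min
    · exact Real.rpow_pos_of_pos (by positivity) _
    · exact Real.sqrt_pos.mpr (by positivity)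
  have hsb1 : sb ^ (p-1) * bg ≤ q / 2 := by
    have h1 : sb ^ (p-1) ≤ ((q/(2*bg)) ^ (p-1)⁻¹) ^ (p-1) :=
      Real.rpow_le_rpow hsbpos.le (min_le_left _ _) (by linarith)
    rw [Real.rpow_inv_rpow (by positivity) (by intro h; exact absurd h (by intro h2; linarith) : p - 1 ≠ 0)] at h1
    have h2 : sb ^ (p-1) * bg ≤ (q/(2*bg)) * bg :=
      mul_le_mul_of_nonneg_right h1 hbg.le
    have h3 : (q/(2*bg)) * bg = q / 2 := by field_simp
    linarith
  have hsb2 : sb^2 * q ≤ δ := by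
    have h1 : sb ≤ Real.sqrt (δ/q) := min_le_right _ _
    have h2 : sb^2 ≤ Real.sqrt (δ/q)^2 := pow_le_pow_left₀ hsbpos.le h1 2
    rw [Real.sq_sqrt (by positivity)] at h2
    have h3 : sb^2 * q ≤ (δ/q) * q := mul_le_mul_of_nonneg_right h2 hq.le
    have h4 : (δ/q) * q = δ := by field_simp
    linarith
  set εP : ℝ := sb^2 * q / (2*bz) with hεP_def
  have hεPpos : 0 < εP := by positivity
  set ε : ℝ := εP ^ (p+1)⁻¹ with hε_def
  have hεpos : 0 < ε := Real.rpow_pos_of_pos hεPpos _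
  have hεpow : ε ^ (p+1) = εP := Real.rpow_inv_rpow hεPpos.le (by linarith)
  set h : ℝ → ℝ := fun s => s^2*q - s^(p+1)*bg - εP*bz with hh_def
  have hcont : Continuous h := by
    refine Continuous.sub (Continuous.sub ?_ ?_) continuous_const
    · exact (continuous_pow 2).mul continuous_const
    · exact (Real.continuous_rpow_const (by linarith)).mul continuous_const
  have hh0 : h 0 < 0 := by
    have h0eq : h 0 = -(εP*bz) := by
      rw [hh_def]
      norm_num [Real.zero_rpow (show p+1 ≠ 0 by linarith)]
    rw [h0eq]
    have := mul_pos hεPpos hbz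
    linarith
  have hhsb : 0 ≤ h sb := by
    have e1 : sb ^ (p+1) = sb^2 * sb^(p-1) := by
      rw [← Real.rpow_natCast sb 2, ← Real.rpow_add hsbpos]
      norm_num
      congr 1
      ring
    have e2 : sb^(p+1) * bg ≤ sb^2 * (q/2) := by
      rw [e1, mul_assoc]
      exact mul_le_mul_of_nonneg_left hsb1 (by positivity)
    have e3 : εP * bz = sb^2*q/2 := by
      rw [hεP_def]
      field_simp
    have e4 : h sb = sb^2*q - sb^(p+1)*bg - εP*bz := rfl
    nlinarith
  obtain ⟨s, hsI, hs_eq⟩ := intermediate_value_Icc hsbpos.le hcont.continuousOn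
    ⟨hh0.le, hhsb⟩
  have hspos : 0 < s := by
    rcases eq_or_lt_of_le hsI.1 with heq | hlt
    · exfalso
      rw [← heq] at hs_eq
      linarith
    · exact hlt
  have hs_val : s^2*q - s^(p+1)*bg - εP*bz = 0 := hs_eq
  -- the values of the functionals on the candidate triple
  have hQ1 : auxQd W₁ (fun x => s * g x) = s^2*q := by
    rw [auxQd_cmul W₁ g hgH.2.1 s]
  have hQ2 : auxQd W₂ (fun x => ε * z x) = 0 :=
    auxQd_bad_cmul W₂ z hzH.2.1 ε (ne_of_gt hεpos) hzbad
  have hQ3 : auxQd W₃ (fun _ => (0:ℝ)) = 0 := auxQd_zero W₃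
  have hP1 : auxPw p (fun x => s * g x) = s^(p+1)*bg := auxPw_cmul p g s hspos.le
  have hP2 : auxPw p (fun x => ε * z x) = εP*bz := by
    rw [auxPw_cmul p z ε hεpos.le, hεpow]
  have hP3 : auxPw p (fun _ : E => (0:ℝ)) = 0 := auxPw_zero p hp
  have hC : auxCb (fun x => s * g x) (fun x => ε * z x) (fun _ => (0:ℝ)) = 0 :=
    auxCb_zero₃ _ _
  have hmem : InNehariV W₁ W₂ W₃ γ p (fun x => s * g x) (fun x => ε * z x)
      (fun _ => (0:ℝ)) := by
    refine ⟨auxMemH1_cmul hgH s, auxMemH1_cmul hzH ε, auxMemH1_zero p, ?_, ?_⟩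
    · rintro ⟨-, h2, -⟩
      apply hzne
      funext x
      have hx := congrFun h2 x
      simp only [Pi.zero_apply] at hx
      rcases mul_eq_zero.mp hx with hx' | hx'
      · exact absurd hx' (ne_of_gt hεpos)
      · simpa using hx'
    · rw [GV_def, hQ1, hQ2, hQ3, hP1, hP2, hP3, hC]
      linarith [hs_val]
  refine ⟨_, _, _, hmem, ?_⟩
  rw [IV_def, hQ1, hQ2, hQ3, hP1, hP2, hP3, hC]
  have hs2 : s^2 ≤ sb^2 := pow_le_pow_left₀ hsI.1 hsI.2 2
  have h5 : s^2*q ≤ δ := le_trans (mul_le_mul_of_nonneg_right hs2 hq.le) hsb2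
  have hpp : 0 < 1/(p+1) := by
    apply div_pos one_pos
    linarith
  have h6 : 0 ≤ s^(p+1)*bg := mul_nonneg (Real.rpow_nonneg hsI.1 _) hbg.le
  have h7 : 0 < εP*bz := mul_pos hεPpos hbz
  nlinarith [h5, hδ, h6, h7, hpp, mul_nonneg hpp.le h6, mul_pos hpp h7]

end AuxBuild

noncomputable section AuxContra

open MeasureTheory Real

variable {N : ℕ}
local notation "E" => EuclideanSpace ℝ (Fin N)

lemma aux_mixed_contra {V₁ V₂ V₃ : E → ℝ} {γ p : ℝ} (hp : 2 < p)
    (hW₁ : ∀ x, 0 ≤ V₁ x) (hW₂ : ∀ x, 0 ≤ V₂ x) (hW₃ : ∀ x, 0 ≤ V₃ x)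
    {ct : ℝ} (hct0 : 0 < ct) (hctc : ct < cLevel V₁ V₂ V₃ γ p)
    (W₁ W₂ W₃ : E → ℝ)
    (hperm : ∀ u₁ u₂ u₃ : E → ℝ, InNehariV W₁ W₂ W₃ γ p u₁ u₂ u₃ →
      ∃ a b c : E → ℝ, InNehariV V₁ V₂ V₃ γ p a b c ∧
        IV V₁ V₂ V₃ γ p a b c = IV W₁ W₂ W₃ γ p u₁ u₂ u₃)
    (g z : E → ℝ) (hgH : MemH1 p g) (hzH : MemH1 p z)
    (hq : 0 < auxQd W₁ g) (hbg : 0 < auxPw p g) (hbz : 0 < auxPw p z)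
    (hzbad : ¬ Integrable (auxQI W₂ z) volume) (hzne : z ≠ 0) : False := by
  obtain ⟨u₁, u₂, u₃, hN, hIV⟩ :=
    aux_build W₁ W₂ W₃ γ p hp g z hgH hzH hq hbg hbz hzbad hzne ct hct0
  obtain ⟨a, b, c, hN', hEq⟩ := hperm u₁ u₂ u₃ hN
  have hle := aux_cLevel_le hp hW₁ hW₂ hW₃ hN'
  rw [hEq] at hle
  linarith

end AuxContra

theorem stmt15 (N : ℕ) (hN : 1 ≤ N) (hN3 : N ≤ 3)
    (p : ℝ) (hp : 2 < p) (hp' : N = 3 → p < 5) (γ : ℝ)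
    (V₁ V₂ V₃ : EuclideanSpace ℝ (Fin N) → ℝ)
    (hmeas : Measurable V₁ ∧ Measurable V₂ ∧ Measurable V₃)
    (hpos : ∃ C : ℝ, 0 < C ∧ ∀ x, C ≤ V₁ x ∧ C ≤ V₂ x ∧ C ≤ V₃ x)
    -- `{𝐮ₙ} ⊂ 𝒩_V` minimizing for `I_V` at level `c_V`
    (U₁ U₂ U₃ : ℕ → EuclideanSpace ℝ (Fin N) → ℝ)
    (hU : ∀ n, InNehariV V₁ V₂ V₃ γ p (U₁ n) (U₂ n) (U₃ n))
    (hUmin : Tendsto (fun n => IV V₁ V₂ V₃ γ p (U₁ n) (U₂ n) (U₃ n)) atTop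
      (𝓝 (cLevel V₁ V₂ V₃ γ p)))
    -- dichotomy splitting `𝐮ₙ = 𝐯ₙ + 𝐰ₙ`
    (Vv₁ Vv₂ Vv₃ Ww₁ Ww₂ Ww₃ : ℕ → EuclideanSpace ℝ (Fin N) → ℝ)
    (hsplit : ∀ n x, U₁ n x = Vv₁ n x + Ww₁ n x ∧ U₂ n x = Vv₂ n x + Ww₂ n x ∧
      U₃ n x = Vv₃ n x + Ww₃ n x)
    (hvH1 : ∀ n, MemH1 p (Vv₁ n) ∧ MemH1 p (Vv₂ n) ∧ MemH1 p (Vv₃ n))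
    (hwH1 : ∀ n, MemH1 p (Ww₁ n) ∧ MemH1 p (Ww₂ n) ∧ MemH1 p (Ww₃ n))
    -- `G_V(𝐮ₙ) = G_V(𝐯ₙ) + G_V(𝐰ₙ) + o(1)` and `J(𝐮ₙ) = J(𝐯ₙ) + J(𝐰ₙ) + o(1)`
    (hGsplit : Tendsto (fun n => GV V₁ V₂ V₃ γ p (U₁ n) (U₂ n) (U₃ n) -
        GV V₁ V₂ V₃ γ p (Vv₁ n) (Vv₂ n) (Vv₃ n) -
        GV V₁ V₂ V₃ γ p (Ww₁ n) (Ww₂ n) (Ww₃ n)) atTop (𝓝 0))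
    (hJsplit : Tendsto (fun n => JV V₁ V₂ V₃ p (U₁ n) (U₂ n) (U₃ n) -
        JV V₁ V₂ V₃ p (Vv₁ n) (Vv₂ n) (Vv₃ n) -
        JV V₁ V₂ V₃ p (Ww₁ n) (Ww₂ n) (Ww₃ n)) atTop (𝓝 0))
    -- the bad case: `G_V(𝐯ₙ) ≤ 0` along the (sub)sequence and `J(𝐯ₙ) → c̃ ∈ (0, c_V)`
    (hGv : ∀ n, GV V₁ V₂ V₃ γ p (Vv₁ n) (Vv₂ n) (Vv₃ n) ≤ 0)
    (ct : ℝ) (hct0 : 0 < ct) (hctc : ct < cLevel V₁ V₂ V₃ γ p)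
    (hJv : Tendsto (fun n => JV V₁ V₂ V₃ p (Vv₁ n) (Vv₂ n) (Vv₃ n)) atTop (𝓝 ct))
    -- the Nehari projections `τₙ 𝐯ₙ ∈ 𝒩_V`
    (τ : ℕ → ℝ) (hτpos : ∀ n, 0 < τ n)
    (hτ : ∀ n, InNehariV V₁ V₂ V₃ γ p
      (fun x => τ n * Vv₁ n x) (fun x => τ n * Vv₂ n x) (fun x => τ n * Vv₃ n x)) :
    (∀ n, τ n ≤ 1) ∧ False := by
  obtain ⟨C, hC, hCV⟩ := hpos
  have hW₁ : ∀ x, 0 ≤ V₁ x := fun x => le_trans hC.le (hCV x).1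
  have hW₂ : ∀ x, 0 ≤ V₂ x := fun x => le_trans hC.le (hCV x).2.1
  have hW₃ : ∀ x, 0 ≤ V₃ x := fun x => le_trans hC.le (hCV x).2.2
  -- Part 1 : all the projection parameters are at most one
  have htau : ∀ n, τ n ≤ 1 := by
    intro n
    by_contra hτ1
    push_neg at hτ1
    obtain ⟨hv1, hv2, hv3⟩ := hvH1 n
    have htpos : (0:ℝ) < τ n := hτpos n
    have hGt' := aux_scaled_GV hv1.2.1 hv2.2.1 hv3.2.1 htpos (hτ n).2.2.2.2
    have hGvn := hGv n
    rw [GV_def] at hGvn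
    have hnz : ¬(Vv₁ n = 0 ∧ Vv₂ n = 0 ∧ Vv₃ n = 0) := by
      rintro ⟨e1, e2, e3⟩
      refine (hτ n).2.2.2.1 ⟨?_, ?_, ?_⟩
      · funext x; rw [e1]; simp
      · funext x; rw [e2]; simp
      · funext x; rw [e3]; simp
    have hbpos := aux_bsum_pos hp hv1 hv2 hv3 hnz
    have hqnn : 0 ≤ auxQd V₁ (Vv₁ n) + auxQd V₂ (Vv₂ n) + auxQd V₃ (Vv₃ n) := by
      have h1 := auxQd_nonneg V₁ hW₁ (Vv₁ n)
      have h2 := auxQd_nonneg V₂ hW₂ (Vv₂ n)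
      have h3 := auxQd_nonneg V₃ hW₃ (Vv₃ n)
      linarith
    have h23 : τ n ^ 2 ≤ τ n ^ 3 := pow_le_pow_right₀ hτ1.le (by norm_num)
    have hsp : τ n ^ (p+1) = τ n ^ 3 * τ n ^ (p-2) := by
      rw [← Real.rpow_natCast (τ n) 3, ← Real.rpow_add htpos]
      norm_num
      congr 1
      ring
    have hrp : 1 < τ n ^ (p-2) := by
      rw [Real.one_lt_rpow_iff_of_pos htpos]
      exact Or.inl ⟨hτ1, by linarith⟩
    have k1 : τ n^2 * (auxQd V₁ (Vv₁ n) + auxQd V₂ (Vv₂ n) + auxQd V₃ (Vv₃ n))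
        ≤ τ n^3 * (auxQd V₁ (Vv₁ n) + auxQd V₂ (Vv₂ n) + auxQd V₃ (Vv₃ n)) :=
      mul_le_mul_of_nonneg_right h23 hqnn
    have k2 : τ n^3 * (auxPw p (Vv₁ n) + auxPw p (Vv₂ n) + auxPw p (Vv₃ n))
        < τ n^3 * (τ n^(p-2) * (auxPw p (Vv₁ n) + auxPw p (Vv₂ n) + auxPw p (Vv₃ n))) := by
      have hBB : (auxPw p (Vv₁ n) + auxPw p (Vv₂ n) + auxPw p (Vv₃ n))
          < τ n^(p-2) * (auxPw p (Vv₁ n) + auxPw p (Vv₂ n) + auxPw p (Vv₃ n)) := by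
        nlinarith
      exact (mul_lt_mul_iff_right₀ (pow_pos htpos 3)).mpr hBB
    have k3 := mul_le_mul_of_nonneg_left hGvn (pow_pos htpos 3).le
    have k4 : τ n^(p+1) * (auxPw p (Vv₁ n) + auxPw p (Vv₂ n) + auxPw p (Vv₃ n))
        = τ n^3 * (τ n^(p-2) * (auxPw p (Vv₁ n) + auxPw p (Vv₂ n) + auxPw p (Vv₃ n))) := by
      rw [hsp]; ring
    nlinarith [hGt', k1, k2, k3, k4]
  refine ⟨htau, ?_⟩
  -- Part 2 : derive the contradiction
  have hcLpos : ct < cLevel V₁ V₂ V₃ γ p := hctc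
  have hη : 0 < min (ct/2) ((cLevel V₁ V₂ V₃ γ p - ct)/2) := lt_min (by linarith) (by linarith)
  obtain ⟨n₀, hn₀⟩ := Metric.tendsto_atTop.mp hJv _ hη
  have hspec := hn₀ n₀ le_rfl
  rw [Real.dist_eq] at hspec
  have habs := abs_lt.mp hspec
  have hJlow : ct/2 < JV V₁ V₂ V₃ p (Vv₁ n₀) (Vv₂ n₀) (Vv₃ n₀) := by
    have := min_le_left (ct/2) ((cLevel V₁ V₂ V₃ γ p - ct)/2)
    linarith [habs.1]
  have hJhigh : JV V₁ V₂ V₃ p (Vv₁ n₀) (Vv₂ n₀) (Vv₃ n₀) < cLevel V₁ V₂ V₃ γ p := by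
    have := min_le_right (ct/2) ((cLevel V₁ V₂ V₃ γ p - ct)/2)
    linarith [habs.2]
  obtain ⟨hv1, hv2, hv3⟩ := hvH1 n₀
  have hbI1 := auxPw_integrable p hp (Vv₁ n₀) hv1.2.2.2.1
  have hbI2 := auxPw_integrable p hp (Vv₂ n₀) hv2.2.2.2.1
  have hbI3 := auxPw_integrable p hp (Vv₃ n₀) hv3.2.2.2.1
  by_cases hgood : Integrable (auxQI V₁ (Vv₁ n₀)) volume ∧
      Integrable (auxQI V₂ (Vv₂ n₀)) volume ∧ Integrable (auxQI V₃ (Vv₃ n₀)) volume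
  · -- all three quadratic integrands are integrable : the classical argument
    obtain ⟨hi1, hi2, hi3⟩ := hgood
    have hJeq : JV V₁ V₂ V₃ p (Vv₁ n₀) (Vv₂ n₀) (Vv₃ n₀)
        = 1/6*(auxQd V₁ (Vv₁ n₀) + auxQd V₂ (Vv₂ n₀) + auxQd V₃ (Vv₃ n₀))
          + (p-2)/(3*(p+1))*(auxPw p (Vv₁ n₀) + auxPw p (Vv₂ n₀) + auxPw p (Vv₃ n₀)) := by
      rw [JV_def, auxJd_of_int hp hi1 hbI1, auxJd_of_int hp hi2 hbI2,
        auxJd_of_int hp hi3 hbI3]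
      ring
    have htpos : (0:ℝ) < τ n₀ := hτpos n₀
    have ht1 : τ n₀ ≤ 1 := htau n₀
    have hGt' := aux_scaled_GV hv1.2.1 hv2.2.1 hv3.2.1 htpos (hτ n₀).2.2.2.2
    have hle := aux_cLevel_le hp hW₁ hW₂ hW₃ (hτ n₀)
    rw [aux_scaled_IV hv1.2.1 hv2.2.1 hv3.2.1 htpos] at hle
    rw [aux_alg_IV hp hGt'] at hle
    have hqnn : 0 ≤ auxQd V₁ (Vv₁ n₀) + auxQd V₂ (Vv₂ n₀) + auxQd V₃ (Vv₃ n₀) := by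
      have h1 := auxQd_nonneg V₁ hW₁ (Vv₁ n₀)
      have h2 := auxQd_nonneg V₂ hW₂ (Vv₂ n₀)
      have h3 := auxQd_nonneg V₃ hW₃ (Vv₃ n₀)
      linarith
    have hbnn : 0 ≤ auxPw p (Vv₁ n₀) + auxPw p (Vv₂ n₀) + auxPw p (Vv₃ n₀) := by
      have h1 := auxPw_nonneg p (Vv₁ n₀)
      have h2 := auxPw_nonneg p (Vv₂ n₀)
      have h3 := auxPw_nonneg p (Vv₃ n₀)
      linarith
    have ht2 : τ n₀^2 ≤ 1 := pow_le_one₀ htpos.le ht1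
    have htp : τ n₀^(p+1) ≤ 1 := Real.rpow_le_one htpos.le ht1 (by linarith)
    have hcp : 0 ≤ (p-2)/(3*(p+1)) := by apply div_nonneg <;> nlinarith
    have m1 : τ n₀^2*(auxQd V₁ (Vv₁ n₀) + auxQd V₂ (Vv₂ n₀) + auxQd V₃ (Vv₃ n₀))
        ≤ auxQd V₁ (Vv₁ n₀) + auxQd V₂ (Vv₂ n₀) + auxQd V₃ (Vv₃ n₀) :=
      mul_le_of_le_one_left hqnn ht2
    have m2 : τ n₀^(p+1)*(auxPw p (Vv₁ n₀) + auxPw p (Vv₂ n₀) + auxPw p (Vv₃ n₀))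
        ≤ auxPw p (Vv₁ n₀) + auxPw p (Vv₂ n₀) + auxPw p (Vv₃ n₀) :=
      mul_le_of_le_one_left hbnn htp
    have m3 := mul_le_mul_of_nonneg_left m2 hcp
    linarith [hle, m1, m3, hJeq, hJhigh]
  · -- some quadratic integrand is not integrable : build tiny Nehari elements
    have hJd1nn := auxJd_nonneg V₁ hW₁ p hp (Vv₁ n₀)
    have hJd2nn := auxJd_nonneg V₂ hW₂ p hp (Vv₂ n₀)
    have hJd3nn := auxJd_nonneg V₃ hW₃ p hp (Vv₃ n₀)
    have hJsum : ct/2 < auxJd V₁ p (Vv₁ n₀) + auxJd V₂ p (Vv₂ n₀) + auxJd V₃ p (Vv₃ n₀) := by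
      rw [← JV_def]; exact hJlow
    have hex : 0 < auxJd V₁ p (Vv₁ n₀) ∨ 0 < auxJd V₂ p (Vv₂ n₀) ∨
        0 < auxJd V₃ p (Vv₃ n₀) := by
      by_contra hcon
      push_neg at hcon
      linarith [hcon.1, hcon.2.1, hcon.2.2]
    rcases hex with hJdj | hJdj | hJdj
    · -- good component is the first one
      have hgood1 : Integrable (auxQI V₁ (Vv₁ n₀)) volume := by
        by_contra hbad
        obtain ⟨hJ0, -⟩ := auxJd_of_bad hp hbad hbI1
        linarith
      have hne1 : Vv₁ n₀ ≠ 0 := by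
        intro h0
        rw [h0, auxJd_zero V₁ p hp] at hJdj
        exact lt_irrefl 0 hJdj
      have hq1 : 0 < auxQd V₁ (Vv₁ n₀) :=
        auxQd_pos V₁ C hC (fun x => (hCV x).1) p _ hv1 hne1 hgood1
      have hbg1 : 0 < auxPw p (Vv₁ n₀) := auxPw_pos p hp _ hv1 hne1
      have hbad23 : ¬ Integrable (auxQI V₂ (Vv₂ n₀)) volume ∨
          ¬ Integrable (auxQI V₃ (Vv₃ n₀)) volume := by
        rcases Classical.em (Integrable (auxQI V₂ (Vv₂ n₀)) volume) with hA | hA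
        · exact Or.inr fun hB => hgood ⟨hgood1, hA, hB⟩
        · exact Or.inl hA
      rcases hbad23 with hzbad | hzbad
      · -- bad component is the second one : arrangement (g, z, 0)
        have hzne := aux_ne_zero_of_bad hzbad
        have hbz := auxPw_pos p hp _ hv2 hzne
        exact aux_mixed_contra hp hW₁ hW₂ hW₃ hct0 hctc V₁ V₂ V₃
          (fun u₁ u₂ u₃ h => ⟨u₁, u₂, u₃, h, rfl⟩)
          (Vv₁ n₀) (Vv₂ n₀) hv1 hv2 hq1 hbg1 hbz hzbad hzne
      · -- bad component is the third one : arrangement (g, 0, z)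
        have hzne := aux_ne_zero_of_bad hzbad
        have hbz := auxPw_pos p hp _ hv3 hzne
        exact aux_mixed_contra hp hW₁ hW₂ hW₃ hct0 hctc V₁ V₃ V₂
          (fun u₁ u₂ u₃ h => ⟨u₁, u₃, u₂, InNehariV_swap23 h,
            IV_swap23 V₁ V₃ V₂ γ p u₁ u₂ u₃⟩)
          (Vv₁ n₀) (Vv₃ n₀) hv1 hv3 hq1 hbg1 hbz hzbad hzne
    · -- good component is the second one
      have hgood2 : Integrable (auxQI V₂ (Vv₂ n₀)) volume := by
        by_contra hbad
        obtain ⟨hJ0, -⟩ := auxJd_of_bad hp hbad hbI2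
        linarith
      have hne2 : Vv₂ n₀ ≠ 0 := by
        intro h0
        rw [h0, auxJd_zero V₂ p hp] at hJdj
        exact lt_irrefl 0 hJdj
      have hq2 : 0 < auxQd V₂ (Vv₂ n₀) :=
        auxQd_pos V₂ C hC (fun x => (hCV x).2.1) p _ hv2 hne2 hgood2
      have hbg2 : 0 < auxPw p (Vv₂ n₀) := auxPw_pos p hp _ hv2 hne2
      have hbad13 : ¬ Integrable (auxQI V₁ (Vv₁ n₀)) volume ∨
          ¬ Integrable (auxQI V₃ (Vv₃ n₀)) volume := by
        rcases Classical.em (Integrable (auxQI V₁ (Vv₁ n₀)) volume) with hA | hA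
        · exact Or.inr fun hB => hgood ⟨hA, hgood2, hB⟩
        · exact Or.inl hA
      rcases hbad13 with hzbad | hzbad
      · -- arrangement (z, g, 0)
        have hzne := aux_ne_zero_of_bad hzbad
        have hbz := auxPw_pos p hp _ hv1 hzne
        exact aux_mixed_contra hp hW₁ hW₂ hW₃ hct0 hctc V₂ V₁ V₃
          (fun u₁ u₂ u₃ h => ⟨u₂, u₁, u₃, InNehariV_swap12 h,
            IV_swap12 V₂ V₁ V₃ γ p u₁ u₂ u₃⟩)
          (Vv₂ n₀) (Vv₁ n₀) hv2 hv1 hq2 hbg2 hbz hzbad hzne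
      · -- arrangement (0, g, z)
        have hzne := aux_ne_zero_of_bad hzbad
        have hbz := auxPw_pos p hp _ hv3 hzne
        exact aux_mixed_contra hp hW₁ hW₂ hW₃ hct0 hctc V₂ V₃ V₁
          (fun u₁ u₂ u₃ h => ⟨u₃, u₁, u₂, InNehariV_cycle h,
            IV_cycle V₂ V₃ V₁ γ p u₁ u₂ u₃⟩)
          (Vv₂ n₀) (Vv₃ n₀) hv2 hv3 hq2 hbg2 hbz hzbad hzne
    · -- good component is the third one
      have hgood3 : Integrable (auxQI V₃ (Vv₃ n₀)) volume := by
        by_contra hbad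
        obtain ⟨hJ0, -⟩ := auxJd_of_bad hp hbad hbI3
        linarith
      have hne3 : Vv₃ n₀ ≠ 0 := by
        intro h0
        rw [h0, auxJd_zero V₃ p hp] at hJdj
        exact lt_irrefl 0 hJdj
      have hq3 : 0 < auxQd V₃ (Vv₃ n₀) :=
        auxQd_pos V₃ C hC (fun x => (hCV x).2.2) p _ hv3 hne3 hgood3
      have hbg3 : 0 < auxPw p (Vv₃ n₀) := auxPw_pos p hp _ hv3 hne3
      have hbad12 : ¬ Integrable (auxQI V₁ (Vv₁ n₀)) volume ∨
          ¬ Integrable (auxQI V₂ (Vv₂ n₀)) volume := by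
        rcases Classical.em (Integrable (auxQI V₁ (Vv₁ n₀)) volume) with hA | hA
        · exact Or.inr fun hB => hgood ⟨hA, hB, hgood3⟩
        · exact Or.inl hA
      rcases hbad12 with hzbad | hzbad
      · -- arrangement (z, 0, g)
        have hzne := aux_ne_zero_of_bad hzbad
        have hbz := auxPw_pos p hp _ hv1 hzne
        exact aux_mixed_contra hp hW₁ hW₂ hW₃ hct0 hctc V₃ V₁ V₂
          (fun u₁ u₂ u₃ h => ⟨u₂, u₃, u₁, InNehariV_cycle (InNehariV_cycle h),
            (IV_cycle V₂ V₃ V₁ γ p u₃ u₁ u₂).trans (IV_cycle V₃ V₁ V₂ γ p u₁ u₂ u₃)⟩)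
          (Vv₃ n₀) (Vv₁ n₀) hv3 hv1 hq3 hbg3 hbz hzbad hzne
      · -- arrangement (0, z, g)
        have hzne := aux_ne_zero_of_bad hzbad
        have hbz := auxPw_pos p hp _ hv2 hzne
        exact aux_mixed_contra hp hW₁ hW₂ hW₃ hct0 hctc V₃ V₂ V₁
          (fun u₁ u₂ u₃ h => ⟨u₃, u₂, u₁, InNehariV_swap23 (InNehariV_cycle h),
            (IV_swap23 V₁ V₃ V₂ γ p u₃ u₁ u₂).trans (IV_cycle V₃ V₂ V₁ γ p u₁ u₂ u₃)⟩)
          (Vv₃ n₀) (Vv₂ n₀) hv3 hv2 hq3 hbg3 hbz hzbad hzne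
end
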